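/- Let $e_1,\dots,e_n$ be the standard basis of $\mathbb{R}^n$ with $n \ge 2$. Consider the multiset $V$ consisting of the vectors $e_i/\sqrt{2}$ for $i=1,\dots,n$ together with $n-1$ copies of each $e_i/\sqrt{2(n-1)}$ for $i=1,\dots,n$. Then $\sum_{v\in V} v v^\top = I_n$, the total number of vectors is $m = n^2$, and there is a subset $S$ (the first $n$ vectors) with positive coefficients $s_i = 2$ satisfying $\sum_{i\in S} s_i v_i v_i^\top = I_n$ with $\sum_{i\in S} s_i = 2n$; moreover $2n \le n^2/\sqrt{n}$ for $n \ge 4$. -/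

import Mathlib

open Matrix

lemma aux_sum_single {n : ℕ} (c : ℝ) :
    (∑ i : Fin n, vecMulVec (c • (Pi.single i 1 : Fin n → ℝ)) (c • (Pi.single i 1 : Fin n → ℝ)))
      = (c * c) • (1 : Matrix (Fin n) (Fin n) ℝ) := by
  ext a b
  simp only [Matrix.sum_apply, vecMulVec_apply, Pi.smul_apply, Pi.single_apply,
    smul_eq_mul, Matrix.smul_apply, Matrix.one_apply]
  rcases eq_or_ne a b with h | h
  · subst h
    simp [Finset.sum_ite_eq', mul_comm]
  · rw [if_neg h, mul_zero]
    apply Finset.sum_eq_zero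
    intro i _
    rcases eq_or_ne a i with rfl | hi
    · simp [Ne.symm h]
    · simp [hi]

theorem stmt_17 {n : ℕ} (hn : 2 ≤ n)
    (v : (Fin n ⊕ (Fin (n - 1) × Fin n)) → (Fin n → ℝ))
    (hv1 : ∀ i : Fin n, v (Sum.inl i) =
      (Real.sqrt 2)⁻¹ • (Pi.single i 1 : Fin n → ℝ))
    (hv2 : ∀ k : Fin (n - 1), ∀ i : Fin n, v (Sum.inr (k, i)) =
      (Real.sqrt (2 * ((n : ℝ) - 1)))⁻¹ • (Pi.single i 1 : Fin n → ℝ)) :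
    (∑ j, vecMulVec (v j) (v j) = (1 : Matrix (Fin n) (Fin n) ℝ)) ∧
    Fintype.card (Fin n ⊕ (Fin (n - 1) × Fin n)) = n ^ 2 ∧
    (∑ i : Fin n, (2 : ℝ) • vecMulVec (v (Sum.inl i)) (v (Sum.inl i)) =
      (1 : Matrix (Fin n) (Fin n) ℝ)) ∧
    (∑ _i : Fin n, (2 : ℝ)) = 2 * n ∧
    (4 ≤ n → 2 * (n : ℝ) ≤ (n : ℝ) ^ 2 / Real.sqrt n) := by
  have hn1 : (1 : ℝ) ≤ (n : ℝ) - 1 := by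
    have : (2 : ℝ) ≤ n := by exact_mod_cast hn
    linarith
  have h2 : ((Real.sqrt 2)⁻¹ * (Real.sqrt 2)⁻¹ : ℝ) = 1 / 2 := by
    rw [← mul_inv]
    rw [← Real.sqrt_mul_self (by norm_num : (0:ℝ) ≤ 2)]
    norm_num
  have hpos : (0 : ℝ) < 2 * ((n : ℝ) - 1) := by linarith
  have h3 : ((Real.sqrt (2 * ((n:ℝ)-1)))⁻¹ * (Real.sqrt (2 * ((n:ℝ)-1)))⁻¹ : ℝ)
      = (2 * ((n:ℝ)-1))⁻¹ := by
    rw [← mul_inv, Real.mul_self_sqrt hpos.le]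
  have hcard : (Fintype.card (Fin (n-1)) : ℝ) = (n : ℝ) - 1 := by
    simp only [Fintype.card_fin]
    have : 1 ≤ n := by omega
    push_cast [Nat.cast_sub this]
    ring
  refine ⟨?_, ?_, ?_, ?_, ?_⟩
  · rw [Fintype.sum_sum_type]
    have e1 : ∑ i : Fin n, vecMulVec (v (Sum.inl i)) (v (Sum.inl i))
        = ((1:ℝ)/2) • (1 : Matrix (Fin n) (Fin n) ℝ) := by
      simp_rw [hv1]; rw [aux_sum_single, h2]
    have e2 : ∑ p : Fin (n-1) × Fin n, vecMulVec (v (Sum.inr p)) (v (Sum.inr p))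
        = ((1:ℝ)/2) • (1 : Matrix (Fin n) (Fin n) ℝ) := by
      rw [Fintype.sum_prod_type]
      have : ∀ k : Fin (n-1), ∑ i : Fin n, vecMulVec (v (Sum.inr (k, i))) (v (Sum.inr (k, i)))
          = (2 * ((n:ℝ)-1))⁻¹ • (1 : Matrix (Fin n) (Fin n) ℝ) := by
        intro k
        simp_rw [hv2 k]; rw [aux_sum_single, h3]
      simp_rw [this]
      rw [Finset.sum_const, Finset.card_univ, ← Nat.cast_smul_eq_nsmul ℝ, smul_smul, hcard]
      congr 1
      rw [mul_inv]
      field_simp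
    rw [e1, e2, ← add_smul]
    norm_num
  · simp only [Fintype.card_sum, Fintype.card_fin, Fintype.card_prod]
    have : 1 ≤ n := by omega
    nlinarith [Nat.sub_add_cancel this]
  · simp_rw [hv1]
    rw [← Finset.smul_sum, aux_sum_single, h2, smul_smul]
    norm_num
  · simp [Finset.sum_const, mul_comm]
  · intro h4
    have hs : (2 : ℝ) ≤ Real.sqrt n := by
      rw [show (2:ℝ) = Real.sqrt 4 by rw [show (4:ℝ) = 2^2 by norm_num, Real.sqrt_sq]; norm_num]
      exact Real.sqrt_le_sqrt (by exact_mod_cast h4)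
    have hsp : (0 : ℝ) < Real.sqrt n := by linarith
    rw [le_div_iff₀ hsp]
    have hss : Real.sqrt n * Real.sqrt n = n := Real.mul_self_sqrt (Nat.cast_nonneg n)
    nlinarith [Nat.cast_nonneg (α := ℝ) n]
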